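/- Let τ > 0 and let E₀, E₁ : ℝ → ℝ be differentiable functions. Then the backward Störmer–Verlet step Ψ : ℝ × ℝ → ℝ × ℝ is differentiable at every point, and the determinant of its Fréchet derivative equals 1 at every point of ℝ × ℝ. -/

import Mathlib

/-- The backward Störmer–Verlet step for the Vlasov–Poisson characteristics. -/
noncomputable def svStep (τ : ℝ) (E0 E1 : ℝ → ℝ) : ℝ × ℝ → ℝ × ℝ :=
  fun p =>
    let vhalf := p.2 + (τ / 2) * E1 p.1
    let x1 := p.1 - τ * vhalf
    (x1, vhalf + (τ / 2) * E0 x1)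

noncomputable def svD (τ e0 e1 : ℝ) : ℝ × ℝ →L[ℝ] ℝ × ℝ :=
  let fst' := ContinuousLinearMap.fst ℝ ℝ ℝ
  let snd' := ContinuousLinearMap.snd ℝ ℝ ℝ
  let D1 := fst' - τ • (snd' + (τ/2) • (e1 • fst'))
  D1.prod ((snd' + (τ/2) • (e1 • fst')) + (τ/2) • (e0 • D1))

lemma svStep_hasFDerivAt (τ : ℝ) (E0 E1 : ℝ → ℝ)
    (hE0 : Differentiable ℝ E0) (hE1 : Differentiable ℝ E1) (p : ℝ × ℝ) :
    HasFDerivAt (svStep τ E0 E1)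
      (svD τ (deriv E0 (p.1 - τ * (p.2 + (τ/2) * E1 p.1))) (deriv E1 p.1)) p := by
  have h1 : HasFDerivAt (fun q : ℝ × ℝ => E1 q.1)
      ((deriv E1 p.1) • ContinuousLinearMap.fst ℝ ℝ ℝ) p :=
    (hE1 p.1).hasDerivAt.comp_hasFDerivAt p (hasFDerivAt_fst)
  have hvh : HasFDerivAt (fun q : ℝ × ℝ => q.2 + (τ/2) * E1 q.1)
      (ContinuousLinearMap.snd ℝ ℝ ℝ + (τ/2) • ((deriv E1 p.1) • ContinuousLinearMap.fst ℝ ℝ ℝ)) p :=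
    (hasFDerivAt_snd).add (h1.const_mul (τ/2))
  have hx1 : HasFDerivAt (fun q : ℝ × ℝ => q.1 - τ * (q.2 + (τ/2) * E1 q.1))
      (ContinuousLinearMap.fst ℝ ℝ ℝ - τ • (ContinuousLinearMap.snd ℝ ℝ ℝ + (τ/2) • ((deriv E1 p.1) • ContinuousLinearMap.fst ℝ ℝ ℝ))) p :=
    (hasFDerivAt_fst).sub (hvh.const_mul τ)
  have hE0c : HasFDerivAt (fun q : ℝ × ℝ => E0 (q.1 - τ * (q.2 + (τ/2) * E1 q.1)))
      ((deriv E0 (p.1 - τ * (p.2 + (τ/2) * E1 p.1))) • (ContinuousLinearMap.fst ℝ ℝ ℝ - τ • (ContinuousLinearMap.snd ℝ ℝ ℝ + (τ/2) • ((deriv E1 p.1) • ContinuousLinearMap.fst ℝ ℝ ℝ)))) p :=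
    (hE0 _).hasDerivAt.comp_hasFDerivAt p hx1
  exact hx1.prodMk (hvh.add (hE0c.const_mul (τ/2)))

lemma svD_det (τ e0 e1 : ℝ) : (svD τ e0 e1).det = 1 := by
  have : (svD τ e0 e1).det =
      Matrix.det (LinearMap.toMatrix (Module.Basis.finTwoProd ℝ) (Module.Basis.finTwoProd ℝ) (svD τ e0 e1)) := by
    rw [LinearMap.det_toMatrix]
  rw [this, Matrix.det_fin_two]
  simp [LinearMap.toMatrix_apply, svD, Module.Basis.finTwoProd_zero, Module.Basis.finTwoProd_one]
  ring


theorem svStep_differentiable_det_one (τ : ℝ) (hτ : 0 < τ) (E0 E1 : ℝ → ℝ)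
    (hE0 : Differentiable ℝ E0) (hE1 : Differentiable ℝ E1) :
    Differentiable ℝ (svStep τ E0 E1) ∧
    ∀ p : ℝ × ℝ, (fderiv ℝ (svStep τ E0 E1) p).det = 1 := by
  constructor
  · intro p
    exact (svStep_hasFDerivAt τ E0 E1 hE0 hE1 p).differentiableAt
  · intro p
    rw [(svStep_hasFDerivAt τ E0 E1 hE0 hE1 p).fderiv]
    exact svD_det τ _ _
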